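/- Let r, h > 0 and define A(s) = 4π ∫₀^h (r cosh(sz)/cosh(sh)) · √(1 + (r s sinh(sz)/cosh(sh))²) dz for s ≥ 0. Suppose s₂ > 0 satisfies r s₂ = cosh(s₂ h) and r s < cosh(s h) for all s > s₂. Then: (i) s₂ h > 1; (ii) A(s₂) > 2π r² tanh(1); and (iii) if moreover 2h < r · tanh(1), then A(s₂) > 4π r h = A(0), i.e. the unstable catenoid has strictly larger area than the cylinder. -/

import Mathlib

open Real intervalIntegral

private lemma tanh_strict_mono {a b : ℝ} (hab : a < b) : Real.tanh a < Real.tanh b := by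
  rw [Real.tanh_eq_sinh_div_cosh, Real.tanh_eq_sinh_div_cosh,
    div_lt_div_iff₀ (Real.cosh_pos a) (Real.cosh_pos b)]
  have h1 : Real.sinh b * Real.cosh a - Real.sinh a * Real.cosh b = Real.sinh (b - a) := by
    rw [Real.sinh_sub]; ring
  have h2 : 0 < Real.sinh (b - a) := Real.sinh_pos_iff.2 (by linarith)
  linarith

private lemma cosh_slope {a b : ℝ} (hab : a < b) :
    Real.cosh b - Real.cosh a < (b - a) * Real.sinh b := by
  obtain ⟨c, hc, hceq⟩ := exists_hasDerivAt_eq_slope Real.cosh Real.sinh hab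
    Real.continuous_cosh.continuousOn (fun x _ => Real.hasDerivAt_cosh x)
  have hcb : Real.sinh c < Real.sinh b := Real.sinh_lt_sinh.2 hc.2
  have hba : 0 < b - a := by linarith
  have : Real.cosh b - Real.cosh a = (b - a) * Real.sinh c := by
    field_simp at hceq; linarith [hceq]
  rw [this]
  exact mul_lt_mul_of_pos_left hcb hba

private lemma integral_cosh_sq (c h : ℝ) (hc : 0 < c) :
    ∫ z in (0:ℝ)..h, Real.cosh (c * z) ^ 2
      = h / 2 + Real.sinh (2 * c * h) / (4 * c) := by
  have key : ∀ z ∈ Set.uIcc (0:ℝ) h,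
      HasDerivAt (fun z => z / 2 + Real.sinh (2 * c * z) / (4 * c))
        (Real.cosh (c * z) ^ 2) z := by
    intro z _
    have h1 : HasDerivAt (fun z : ℝ => 2 * c * z) (2 * c) z := by
      simpa using (hasDerivAt_id z).const_mul (2 * c)
    have h2 : HasDerivAt (fun z : ℝ => Real.sinh (2 * c * z))
        (Real.cosh (2 * c * z) * (2 * c)) z := (Real.hasDerivAt_sinh _).comp z h1
    have h3 : HasDerivAt (fun z => z / 2 + Real.sinh (2 * c * z) / (4 * c))
        (1 / 2 + Real.cosh (2 * c * z) * (2 * c) / (4 * c)) z :=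
      ((hasDerivAt_id z).div_const 2).add (h2.div_const (4 * c))
    convert h3 using 1
    have hcosh2 : Real.cosh (2 * c * z) = 2 * Real.cosh (c * z) ^ 2 - 1 := by
      rw [show 2 * c * z = 2 * (c * z) by ring, Real.cosh_two_mul]
      nlinarith [Real.cosh_sq (c * z)]
    rw [hcosh2]
    field_simp
    ring
  have hcont : IntervalIntegrable (fun z => Real.cosh (c * z) ^ 2) MeasureTheory.volume 0 h :=
    (Continuous.pow (Real.continuous_cosh.comp (continuous_const.mul continuous_id)) 2).intervalIntegrable 0 h
  rw [intervalIntegral.integral_eq_sub_of_hasDerivAt key hcont]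
  simp [Real.sinh_zero]

theorem unstable_catenoid_area_gt_cylinder
    (r h : ℝ) (hr : 0 < r) (hh : 0 < h)
    (A : ℝ → ℝ)
    (hA : ∀ s : ℝ, A s = 4 * Real.pi * ∫ z in (0:ℝ)..h,
        (r * Real.cosh (s * z) / Real.cosh (s * h)) *
          Real.sqrt (1 + (r * s * Real.sinh (s * z) / Real.cosh (s * h)) ^ 2))
    (s₂ : ℝ) (hs₂ : 0 < s₂) (heq : r * s₂ = Real.cosh (s₂ * h))
    (hlargest : ∀ s : ℝ, s₂ < s → r * s < Real.cosh (s * h)) :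
    1 < s₂ * h ∧
      2 * Real.pi * r ^ 2 * Real.tanh 1 < A s₂ ∧
      (2 * h < r * Real.tanh 1 → 4 * Real.pi * r * h < A s₂) := by
  have hcosh_pos : 0 < Real.cosh (s₂ * h) := Real.cosh_pos _
  -- Step 1 : r ≤ h * sinh (s₂ h)
  have hslope : r ≤ h * Real.sinh (s₂ * h) := by
    by_contra hlt
    push_neg at hlt
    have hcont : ContinuousAt (fun s => h * Real.sinh (s * h)) s₂ :=
      (Real.continuous_sinh.comp (continuous_id.mul continuous_const)).continuousAt.const_mul h
    have hev : ∀ᶠ s in nhds s₂, h * Real.sinh (s * h) < r :=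
      hcont.eventually_lt continuousAt_const hlt
    have hev' : ∀ᶠ s in nhdsWithin s₂ (Set.Ioi s₂),
        h * Real.sinh (s * h) < r ∧ s ∈ Set.Ioi s₂ :=
      (hev.filter_mono nhdsWithin_le_nhds).and self_mem_nhdsWithin
    obtain ⟨s, hs1, hs2⟩ := hev'.exists
    have hsl : s₂ * h < s * h := by
      exact mul_lt_mul_of_pos_right hs2 hh
    have h1 : Real.cosh (s * h) - Real.cosh (s₂ * h) < (s * h - s₂ * h) * Real.sinh (s * h) :=
      cosh_slope hsl
    have h2 := hlargest s hs2
    nlinarith [hs1, h1, h2, heq]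
  -- Step 2 : 1 < s₂ * h
  have hx : 0 < s₂ * h := mul_pos hs₂ hh
  have hsinh_pos : 0 < Real.sinh (s₂ * h) := Real.sinh_pos_iff.2 hx
  have hkey : Real.cosh (s₂ * h) ≤ (s₂ * h) * Real.sinh (s₂ * h) := by
    calc Real.cosh (s₂ * h) = r * s₂ := heq.symm
      _ ≤ (h * Real.sinh (s₂ * h)) * s₂ := by
          exact mul_le_mul_of_nonneg_right hslope hs₂.le
      _ = (s₂ * h) * Real.sinh (s₂ * h) := by ring
  have hsc : Real.sinh (s₂ * h) < Real.cosh (s₂ * h) := Real.sinh_lt_cosh _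
  have h1lt : 1 < s₂ * h := by
    by_contra hle
    push_neg at hle
    nlinarith [hkey, hsc, hsinh_pos]
  -- Step 3 : compute A s₂
  have hintegrand : ∀ z : ℝ,
      (r * Real.cosh (s₂ * z) / Real.cosh (s₂ * h)) *
        Real.sqrt (1 + (r * s₂ * Real.sinh (s₂ * z) / Real.cosh (s₂ * h)) ^ 2)
        = Real.cosh (s₂ * z) ^ 2 / s₂ := by
    intro z
    have h1 : r * s₂ / Real.cosh (s₂ * h) = 1 := by
      rw [heq]; field_simp
    have h2 : r * s₂ * Real.sinh (s₂ * z) / Real.cosh (s₂ * h) = Real.sinh (s₂ * z) := by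
      rw [heq, mul_comm, mul_div_assoc, div_self hcosh_pos.ne', mul_one]
    rw [h2]
    have h3 : 1 + Real.sinh (s₂ * z) ^ 2 = Real.cosh (s₂ * z) ^ 2 := (Real.cosh_sq' _).symm
    rw [h3, Real.sqrt_sq (Real.cosh_pos _).le]
    have h4 : r * Real.cosh (s₂ * z) / Real.cosh (s₂ * h) = Real.cosh (s₂ * z) / s₂ := by
      rw [div_eq_div_iff hcosh_pos.ne' hs₂.ne', ← heq]; ring
    rw [h4]
    ring
  have hAval : A s₂ = 4 * Real.pi * ((h / 2 + Real.sinh (2 * s₂ * h) / (4 * s₂)) / s₂) := by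
    rw [hA s₂]
    congr 1
    rw [show (fun z => (r * Real.cosh (s₂ * z) / Real.cosh (s₂ * h)) *
          Real.sqrt (1 + (r * s₂ * Real.sinh (s₂ * z) / Real.cosh (s₂ * h)) ^ 2))
        = fun z => Real.cosh (s₂ * z) ^ 2 / s₂ from funext hintegrand]
    rw [intervalIntegral.integral_div, integral_cosh_sq s₂ h hs₂]
  -- Step 4 : rewrite the sinh(2x) term as 2 r² tanh
  have hsinh2 : Real.sinh (2 * s₂ * h) = 2 * Real.sinh (s₂ * h) * Real.cosh (s₂ * h) := by
    rw [show 2 * s₂ * h = 2 * (s₂ * h) by ring, Real.sinh_two_mul]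
  have htanh : Real.sinh (s₂ * h) = r * s₂ * Real.tanh (s₂ * h) := by
    rw [Real.tanh_eq_sinh_div_cosh, ← heq]
    field_simp [(show Real.cosh (s₂*h) ≠ 0 from hcosh_pos.ne'), ← heq]
  have hAform : A s₂ = 2 * Real.pi * h / s₂ + 2 * Real.pi * r ^ 2 * Real.tanh (s₂ * h) := by
    rw [hAval, hsinh2, htanh, ← heq]
    field_simp
    ring
  have hpi : 0 < Real.pi := Real.pi_pos
  have htmono : Real.tanh 1 < Real.tanh (s₂ * h) := tanh_strict_mono h1lt
  have hpos : 0 < 2 * Real.pi * h / s₂ := by positivity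
  have hmain : 2 * Real.pi * r ^ 2 * Real.tanh 1 < A s₂ := by
    have hmul : 2 * Real.pi * r ^ 2 * Real.tanh 1 ≤ 2 * Real.pi * r ^ 2 * Real.tanh (s₂ * h) :=
      mul_le_mul_of_nonneg_left htmono.le (by positivity)
    rw [hAform]; linarith
  refine ⟨h1lt, hmain, fun hsmall => ?_⟩
  have : 4 * Real.pi * r * h = 2 * Real.pi * r * (2 * h) := by ring
  rw [this]
  calc 2 * Real.pi * r * (2 * h) < 2 * Real.pi * r * (r * Real.tanh 1) := by
        apply mul_lt_mul_of_pos_left hsmall (by positivity)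
    _ = 2 * Real.pi * r ^ 2 * Real.tanh 1 := by ring
    _ < A s₂ := hmain
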